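/- Let F : ℝ^n → ℝ^n be continuously differentiable on a neighborhood of p* with F(p*) = 0 and DF(p*) invertible. Then there exists ε > 0 such that for every p_0 with ‖p_0 − p*‖ ≤ ε, the exact Newton iteration p_{k+1} = p_k − DF(p_k)⁻¹ F(p_k) is well defined (DF(p_k) is invertible for every k), all iterates remain in the ε-ball around p*, and p_k converges to p* q-superlinearly, i.e., for every δ > 0 there exists K such that ‖p_{k+1} − p*‖ ≤ δ ‖p_k − p*‖ for all k ≥ K. -/

import Mathlib

open Filter Topology Metric

theorem newton_qsuperlinear_convergence
    (n : ℕ) (F : EuclideanSpace ℝ (Fin n) → EuclideanSpace ℝ (Fin n))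
    (pstar : EuclideanSpace ℝ (Fin n))
    (hF : ∃ U : Set (EuclideanSpace ℝ (Fin n)),
      IsOpen U ∧ pstar ∈ U ∧ ContDiffOn ℝ 1 F U)
    (hroot : F pstar = 0)
    (hinv : IsUnit (fderiv ℝ F pstar)) :
    ∃ ε > (0:ℝ),
      ∀ p : ℕ → EuclideanSpace ℝ (Fin n),
        ‖p 0 - pstar‖ ≤ ε →
        (∀ k, p (k+1) = p k - Ring.inverse (fderiv ℝ F (p k)) (F (p k))) →
        (∀ k, IsUnit (fderiv ℝ F (p k))) ∧
        (∀ k, ‖p k - pstar‖ ≤ ε) ∧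
        Tendsto p atTop (𝓝 pstar) ∧
        (∀ δ > (0:ℝ), ∃ K : ℕ, ∀ k ≥ K,
          ‖p (k+1) - pstar‖ ≤ δ * ‖p k - pstar‖) := by
  obtain ⟨U, hUopen, hUmem, hC1⟩ := hF
  set g : EuclideanSpace ℝ (Fin n) → (EuclideanSpace ℝ (Fin n) →L[ℝ] EuclideanSpace ℝ (Fin n)) := fderiv ℝ F with hgdef
  set A : EuclideanSpace ℝ (Fin n) →L[ℝ] EuclideanSpace ℝ (Fin n) := g pstar with hAdef
  set M : ℝ := ‖Ring.inverse A‖ + 1 with hMdef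
  have hM0 : 0 < M := by positivity
  -- continuity of the derivative at pstar
  have hgc : ContinuousAt g pstar :=
    (hC1.continuousOn_fderiv_of_isOpen hUopen le_rfl).continuousAt
      (hUopen.mem_nhds hUmem)
  have hdiff : ∀ x ∈ U, HasFDerivAt F (g x) x := fun x hx =>
    ((hC1.differentiableOn one_ne_zero).differentiableAt (hUopen.mem_nhds hx)).hasFDerivAt
  -- key quantitative lemma
  have key : ∀ η > (0:ℝ), ∃ r > (0:ℝ), ∀ x ∈ closedBall pstar r,
      IsUnit (g x) ∧
      ‖x - Ring.inverse (g x) (F x) - pstar‖ ≤ 2 * M * η * ‖x - pstar‖ := by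
    intro η hη
    have h1 : ∀ᶠ x in 𝓝 pstar, IsUnit (g x) :=
      hgc (Units.isOpen.mem_nhds hinv)
    have h2 : ∀ᶠ x in 𝓝 pstar, ‖Ring.inverse (g x)‖ ≤ M := by
      have hic : ContinuousAt (Ring.inverse :
          (EuclideanSpace ℝ (Fin n) →L[ℝ] EuclideanSpace ℝ (Fin n)) → _) A := by
        have := NormedRing.inverse_continuousAt hinv.unit
        rwa [hinv.unit_spec] at this
      have hc : ContinuousAt (fun x => ‖Ring.inverse (g x)‖) pstar := (hic.comp hgc).norm
      have hlt : ‖Ring.inverse (g pstar)‖ < M := by rw [← hAdef, hMdef]; linarith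
      exact hc.eventually_le_const hlt
    have h3 : ∀ᶠ x in 𝓝 pstar, ‖g x - A‖ ≤ η := by
      have hc : ContinuousAt (fun x => ‖g x - A‖) pstar :=
        (hgc.sub continuousAt_const).norm
      have hlt : ‖g pstar - A‖ < η := by
        rw [← hAdef]; simp only [sub_self, norm_zero]; exact hη
      exact hc.eventually_le_const hlt
    have h4 : ∀ᶠ x in 𝓝 pstar, x ∈ U := hUopen.eventually_mem hUmem
    obtain ⟨r', hr', hball⟩ := Metric.eventually_nhds_iff.1 (((h1.and h2).and h3).and h4)
    refine ⟨r' / 2, by positivity, ?_⟩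
    have hsub : ∀ y ∈ closedBall pstar (r' / 2), (IsUnit (g y) ∧ ‖Ring.inverse (g y)‖ ≤ M)
        ∧ ‖g y - A‖ ≤ η ∧ y ∈ U := by
      intro y hy
      have : dist y pstar < r' := lt_of_le_of_lt (mem_closedBall.1 hy) (by linarith)
      exact ⟨(hball this).1.1, (hball this).1.2, (hball this).2⟩
    intro x hx
    obtain ⟨⟨hu, hMx⟩, hηx, hxU⟩ := hsub x hx
    refine ⟨hu, ?_⟩
    -- mean value estimate
    have bound : ∀ y ∈ closedBall pstar (r' / 2), ‖g y - g x‖ ≤ 2 * η := by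
      intro y hy
      obtain ⟨⟨-, -⟩, hηy, -⟩ := hsub y hy
      calc ‖g y - g x‖ = ‖(g y - A) - (g x - A)‖ := by congr 1; abel
        _ ≤ ‖g y - A‖ + ‖g x - A‖ := norm_sub_le _ _
        _ ≤ 2 * η := by linarith
    have hderivs : ∀ y ∈ closedBall pstar (r' / 2),
        HasFDerivWithinAt F (g y) (closedBall pstar (r' / 2)) y := fun y hy =>
      (hdiff y (hsub y hy).2.2).hasFDerivWithinAt
    have mvt := (convex_closedBall pstar (r' / 2)).norm_image_sub_le_of_norm_hasFDerivWithin_le'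
      hderivs bound hx (mem_closedBall_self (by positivity))
    -- mvt : ‖F pstar - F x - (g x) (pstar - x)‖ ≤ 2 * η * ‖pstar - x‖
    have hinv_eq : Ring.inverse (g x) = (↑hu.unit⁻¹ : EuclideanSpace ℝ (Fin n) →L[ℝ] EuclideanSpace ℝ (Fin n)) := by
      conv_lhs => rw [← hu.unit_spec]
      exact Ring.inverse_unit _
    have hcomp : ∀ v : EuclideanSpace ℝ (Fin n), (↑hu.unit⁻¹ : EuclideanSpace ℝ (Fin n) →L[ℝ] EuclideanSpace ℝ (Fin n)) ((g x) v) = v := by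
      intro v
      have h := congrArg (fun L : EuclideanSpace ℝ (Fin n) →L[ℝ] EuclideanSpace ℝ (Fin n) => L v)
        hu.unit.inv_mul
      simp only [ContinuousLinearMap.mul_apply, ContinuousLinearMap.one_apply] at h
      rw [hu.unit_spec] at h
      exact h
    have herr : x - Ring.inverse (g x) (F x) - pstar
        = (↑hu.unit⁻¹ : EuclideanSpace ℝ (Fin n) →L[ℝ] EuclideanSpace ℝ (Fin n)) ((g x) (x - pstar) - F x) := by
      rw [hinv_eq, map_sub, hcomp]
      abel
    have hnorm_eq : ‖(g x) (x - pstar) - F x‖ = ‖F pstar - F x - (g x) (pstar - x)‖ := by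
      have hveq : (g x) (x - pstar) - F x = F pstar - F x - (g x) (pstar - x) := by
        rw [hroot, show pstar - x = -(x - pstar) by abel, map_neg]
        abel
      rw [hveq]
    calc ‖x - Ring.inverse (g x) (F x) - pstar‖
        = ‖(↑hu.unit⁻¹ : EuclideanSpace ℝ (Fin n) →L[ℝ] EuclideanSpace ℝ (Fin n)) ((g x) (x - pstar) - F x)‖ := by rw [herr]
      _ ≤ ‖(↑hu.unit⁻¹ : EuclideanSpace ℝ (Fin n) →L[ℝ] EuclideanSpace ℝ (Fin n))‖ * ‖(g x) (x - pstar) - F x‖ :=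
          ContinuousLinearMap.le_opNorm _ _
      _ ≤ M * (2 * η * ‖x - pstar‖) := by
          apply mul_le_mul
          · rw [← hinv_eq]; exact hMx
          · rw [hnorm_eq]
            calc ‖F pstar - F x - (g x) (pstar - x)‖ ≤ 2 * η * ‖pstar - x‖ := mvt
              _ = 2 * η * ‖x - pstar‖ := by rw [norm_sub_rev]
          · positivity
          · exact le_of_lt hM0
      _ = 2 * M * η * ‖x - pstar‖ := by ring
  -- main argument
  obtain ⟨ε, hε, hkey⟩ := key (1 / (8 * M)) (by positivity)
  have hcontr : 2 * M * (1 / (8 * M)) = 1 / 4 := by field_simp; ring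
  refine ⟨ε, hε, fun p hp0 hrec => ?_⟩
  have hstep : ∀ k, ‖p k - pstar‖ ≤ (1 / 2) ^ k * ε ∧ IsUnit (g (p k)) := by
    intro k
    induction k with
    | zero =>
        refine ⟨by simpa using hp0, (hkey _ (by simpa [mem_closedBall, dist_eq_norm] using hp0)).1⟩
    | succ k ih =>
        have hball : p k ∈ closedBall pstar ε := by
          rw [mem_closedBall, dist_eq_norm]
          calc ‖p k - pstar‖ ≤ (1/2)^k * ε := ih.1
            _ ≤ 1 * ε := by
                apply mul_le_mul_of_nonneg_right _ (le_of_lt hε)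
                exact pow_le_one₀ (by norm_num) (by norm_num)
            _ = ε := one_mul ε
        obtain ⟨-, hest⟩ := hkey _ hball
        have h1 : ‖p (k+1) - pstar‖ ≤ (1/4) * ‖p k - pstar‖ := by
          rw [hrec k]
          calc ‖p k - Ring.inverse (g (p k)) (F (p k)) - pstar‖
              ≤ 2 * M * (1 / (8 * M)) * ‖p k - pstar‖ := hest
            _ = (1/4) * ‖p k - pstar‖ := by rw [hcontr]
        have h2 : ‖p (k+1) - pstar‖ ≤ (1/2)^(k+1) * ε := by
          calc ‖p (k+1) - pstar‖ ≤ (1/4) * ‖p k - pstar‖ := h1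
            _ ≤ (1/2) * ((1/2)^k * ε) := by nlinarith [ih.1, norm_nonneg (p k - pstar)]
            _ = (1/2)^(k+1) * ε := by ring
        refine ⟨h2, (hkey _ ?_).1⟩
        rw [mem_closedBall, dist_eq_norm]
        calc ‖p (k+1) - pstar‖ ≤ (1/2)^(k+1) * ε := h2
          _ ≤ 1 * ε := by
              apply mul_le_mul_of_nonneg_right _ (le_of_lt hε)
              exact pow_le_one₀ (by norm_num) (by norm_num)
          _ = ε := one_mul ε
  have hinball : ∀ k, ‖p k - pstar‖ ≤ ε := by
    intro k
    calc ‖p k - pstar‖ ≤ (1/2)^k * ε := (hstep k).1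
      _ ≤ 1 * ε := mul_le_mul_of_nonneg_right (pow_le_one₀ (by norm_num) (by norm_num)) hε.le
      _ = ε := one_mul ε
  have htend : Tendsto p atTop (𝓝 pstar) := by
    rw [tendsto_iff_norm_sub_tendsto_zero]
    have hgeo : Tendsto (fun k : ℕ => (1/2:ℝ)^k * ε) atTop (𝓝 0) := by
      have := tendsto_pow_atTop_nhds_zero_of_lt_one (by norm_num : (0:ℝ) ≤ 1/2) (by norm_num)
      simpa using this.mul_const ε
    exact squeeze_zero (fun k => norm_nonneg _) (fun k => (hstep k).1) hgeo
  refine ⟨fun k => (hstep k).2, hinball, htend, ?_⟩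
  intro δ hδ
  obtain ⟨r, hr, hkey'⟩ := key (δ / (2 * M)) (by positivity)
  have hev : ∀ᶠ k in atTop, p k ∈ closedBall pstar r :=
    htend (closedBall_mem_nhds pstar hr)
  obtain ⟨K, hK⟩ := eventually_atTop.1 hev
  refine ⟨K, fun k hk => ?_⟩
  obtain ⟨-, hest⟩ := hkey' _ (hK k hk)
  rw [hrec k]
  calc ‖p k - Ring.inverse (g (p k)) (F (p k)) - pstar‖
      ≤ 2 * M * (δ / (2 * M)) * ‖p k - pstar‖ := hest
    _ = δ * ‖p k - pstar‖ := by rw [mul_div_cancel₀]; positivity
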